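/- Let (R,m) be a Noetherian local ring of dimension d, let x_1,...,x_d and y_1,...,y_d both be systems of parameters with y_i = Σ_j a_ij x_j for a matrix A. Then the map R/(x)^lim → R/(y)^lim induced by multiplication by det A is injective; that is, if r·det A ∈ (y_1,...,y_d)^lim then r ∈ (x_1,...,x_d)^lim. -/

import Mathlib

section Aux

variable {R : Type*} [CommRing R] {d : ℕ}

lemma aux_mul_span_mem {S : Set R} {K : Ideal R} {c : R}
    (h : ∀ s ∈ S, c * s ∈ K) {z : R} (hz : z ∈ Ideal.span S) : c * z ∈ K := by
  refine Submodule.span_induction (fun s hs => h s hs) (by simp) ?_ ?_ hz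
  · intro u v _ _ hu hv
    rw [mul_add]; exact K.add_mem hu hv
  · intro t u _ hu
    rw [smul_eq_mul, show c * (t * u) = (c * u) * t by ring]
    exact K.mul_mem_right t hu

lemma aux_row_step (b a : Fin d → R)
    (M : Matrix (Fin d) (Fin d) R) (i₀ : Fin d) (e q : Fin d → R)
    (hM : M.mulVec b = a) (he : ∑ j, e j * b j = 0) (hq : ∑ j, q j * b j = a i₀) :
    (∏ i, a i) * (M.updateRow i₀ e).det ∈ Ideal.span (Set.range fun i => a i ^ 2) := by
  set D := M.updateRow i₀ e with hD
  set c := D.mulVec b with hcdef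
  have hc0 : c i₀ = 0 := by
    have : c i₀ = ∑ j, e j * b j := by
      simp [hcdef, hD, Matrix.mulVec, dotProduct, Matrix.updateRow_self]
    rw [this, he]
  have hck : ∀ k, k ≠ i₀ → c k = a k := by
    intro k hk
    have : c k = ∑ j, M k j * b j := by
      simp [hcdef, hD, Matrix.mulVec, dotProduct, Matrix.updateRow_ne hk]
    rw [this, ← hM]
    simp [Matrix.mulVec, dotProduct]
  have cram : ∀ j, D.det * b j = ∑ k, D.adjugate j k * c k := by
    intro j
    have h1 : D.adjugate.mulVec c = D.det • b := by
      rw [hcdef, Matrix.mulVec_mulVec, Matrix.adjugate_mul, Matrix.smul_mulVec,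
        Matrix.one_mulVec]
    have h2 := congrFun h1 j
    simpa [Matrix.mulVec, dotProduct] using h2.symm
  have key1 : (∏ i, a i) * D.det =
      ∑ j, ∑ k, (q j * (∏ i ∈ Finset.univ.erase i₀, a i)) * (D.adjugate j k * c k) := by
    calc (∏ i, a i) * D.det
        = (∏ i ∈ Finset.univ.erase i₀, a i) * (a i₀ * D.det) := by
          rw [← Finset.mul_prod_erase Finset.univ a (Finset.mem_univ i₀)]; ring
      _ = (∏ i ∈ Finset.univ.erase i₀, a i) * ∑ j, q j * (D.det * b j) := by
          rw [show ∑ j, q j * (D.det * b j) = D.det * ∑ j, q j * b j from by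
            rw [Finset.mul_sum]; exact Finset.sum_congr rfl fun j _ => by ring, hq]
          ring
      _ = ∑ j, ∑ k, (q j * (∏ i ∈ Finset.univ.erase i₀, a i)) * (D.adjugate j k * c k) := by
          rw [Finset.mul_sum]
          refine Finset.sum_congr rfl fun j _ => ?_
          rw [cram j, Finset.mul_sum, Finset.mul_sum]
          exact Finset.sum_congr rfl fun k _ => by ring
  rw [key1]
  refine Ideal.sum_mem _ fun j _ => Ideal.sum_mem _ fun k _ => ?_
  by_cases hk : k = i₀
  · simp [hk, hc0]
  · have hmem : a k ^ 2 ∈ Ideal.span (Set.range fun i => a i ^ 2) := Ideal.subset_span ⟨k, rfl⟩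
    have heq : (q j * (∏ i ∈ Finset.univ.erase i₀, a i)) * (D.adjugate j k * c k) =
        (q j * D.adjugate j k * ∏ i ∈ (Finset.univ.erase i₀).erase k, a i) * a k ^ 2 := by
      rw [hck k hk,
        ← Finset.mul_prod_erase (Finset.univ.erase i₀) a
          (Finset.mem_erase.mpr ⟨hk, Finset.mem_univ k⟩)]
      ring
    rw [heq]
    exact Ideal.mul_mem_left _ _ hmem

/-- Wiebe-type lemma: two matrix expressions of the same vector `a` in terms of `b`
have determinants congruent modulo `(a₁²,…) : (a₁⋯a_d)`. -/
lemma aux_det_well_defined (b a : Fin d → R)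
    (Q Q' : Matrix (Fin d) (Fin d) R) (hQ : Q.mulVec b = a) (hQ' : Q'.mulVec b = a) :
    (∏ i, a i) * (Q.det - Q'.det) ∈ Ideal.span (Set.range fun i => a i ^ 2) := by
  set M : ℕ → Matrix (Fin d) (Fin d) R :=
    fun n => Matrix.of fun i j => if (i : ℕ) < n then Q i j else Q' i j with hM
  have hMd : M d = Q := by
    ext i j; simp [hM, i.isLt]
  have hM0 : M 0 = Q' := by
    ext i j; simp [hM]
  have hrow : ∀ n, (M n).mulVec b = a := by
    intro n
    funext i
    by_cases h : (i : ℕ) < n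
    · have : (M n) i = Q i := by funext j; simp [hM, h]
      rw [show (M n).mulVec b i = Q.mulVec b i from by rw [Matrix.mulVec, this]; rfl, hQ]
    · have : (M n) i = Q' i := by funext j; simp [hM, h]
      rw [show (M n).mulVec b i = Q'.mulVec b i from by rw [Matrix.mulVec, this]; rfl, hQ']
  have tele : Q.det - Q'.det = ∑ n ∈ Finset.range d, ((M (n + 1)).det - (M n).det) := by
    rw [Finset.sum_range_sub (fun n => (M n).det), hMd, hM0]
  rw [tele, Finset.mul_sum]
  refine Ideal.sum_mem _ fun n hn => ?_
  have hnd : n < d := Finset.mem_range.mp hn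
  set i₀ : Fin d := ⟨n, hnd⟩ with hi₀
  have hup : M (n + 1) = (M n).updateRow i₀ (Q i₀) := by
    ext i j
    rcases eq_or_ne i i₀ with h | h
    · subst h; simp [hM, hi₀, Matrix.updateRow_self, Nat.lt_succ_self]
    · rw [Matrix.updateRow_ne h]
      have : (i : ℕ) ≠ n := fun hc => h (Fin.ext hc)
      simp only [hM, Matrix.of_apply]
      by_cases hin : (i : ℕ) < n
      · simp [hin, Nat.lt_succ_of_lt hin]
      · simp [hin, show ¬((i : ℕ) < n + 1) by omega]
  have hself : M n = (M n).updateRow i₀ (Q' i₀) := by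
    have : (M n) i₀ = Q' i₀ := by funext j; simp [hM, hi₀]
    rw [← this, Matrix.updateRow_eq_self]
  have hdiff : (M (n + 1)).det - (M n).det = ((M n).updateRow i₀ (Q i₀ - Q' i₀)).det := by
    rw [hup]
    nth_rewrite 2 [hself]
    rw [show Q i₀ - Q' i₀ = Q i₀ + (-1 : R) • Q' i₀ by ext j; simp; ring]
    rw [Matrix.det_updateRow_add, Matrix.det_updateRow_smul]
    ring
  rw [hdiff]
  refine aux_row_step b a (M n) i₀ (Q i₀ - Q' i₀) (Q i₀) (hrow n) ?_ ?_
  · have h1 : ∑ j, Q i₀ j * b j = a i₀ := by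
      have := congrFun hQ i₀
      simpa [Matrix.mulVec, dotProduct] using this
    have h2 : ∑ j, Q' i₀ j * b j = a i₀ := by
      have := congrFun hQ' i₀
      simpa [Matrix.mulVec, dotProduct] using this
    have : ∑ j, (Q i₀ - Q' i₀) j * b j = (∑ j, Q i₀ j * b j) - ∑ j, Q' i₀ j * b j := by
      rw [← Finset.sum_sub_distrib]
      exact Finset.sum_congr rfl fun j _ => by simp [sub_mul]
    rw [this, h1, h2, sub_self]
  · have := congrFun hQ i₀
    simpa [Matrix.mulVec, dotProduct] using this

end Aux

/-- The limit closure of a finite sequence `x` in a commutative ring. -/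
def limClosure {R : Type*} [CommRing R] {n : ℕ} (x : Fin n → R) : Set R :=
  {r : R | ∃ t : ℕ, 1 ≤ t ∧
    (∏ i, x i) ^ (t - 1) * r ∈ Ideal.span (Set.range fun i => x i ^ t)}

/-- A sequence of `d` elements of a `d`-dimensional Noetherian local ring is a
system of parameters if it generates an ideal primary to the maximal ideal. -/
def IsSOP {R : Type*} [CommRing R] [IsLocalRing R] {d : ℕ} (x : Fin d → R) : Prop :=
  (Ideal.span (Set.range x)).radical = IsLocalRing.maximalIdeal R

/-- if `x` and `y` are both systems of parameters and
`y_i = Σ_j A i j x_j`, then multiplication by `det A` is injective from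
`R/(x)^lim` to `R/(y)^lim`. -/
theorem stmt3 {R : Type*} [CommRing R] [IsNoetherianRing R] [IsLocalRing R]
    {d : ℕ} (hdim : ringKrullDim R = d)
    (x y : Fin d → R) (hx : IsSOP x) (hy : IsSOP y)
    (A : Matrix (Fin d) (Fin d) R) (hA : ∀ i, y i = ∑ j, A i j * x j)
    (r : R) (hr : A.det * r ∈ limClosure y) :
    r ∈ limClosure x := by
  obtain ⟨t₀, ht₀, hmem⟩ := hr
  set J : Ideal R := Ideal.span (Set.range fun j => y j ^ t₀) with hJ
  -- every `x i` has a power in `J`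
  have hxJ : ∀ i, ∃ n, x i ^ n ∈ J := by
    intro i
    have hxi : x i ∈ IsLocalRing.maximalIdeal R := by
      rw [← hx]
      exact Ideal.le_radical (Ideal.subset_span ⟨i, rfl⟩)
    have hyJ : IsLocalRing.maximalIdeal R ≤ J.radical := by
      rw [← hy]
      have h1 : Ideal.span (Set.range y) ≤ J.radical := by
        rw [Ideal.span_le]
        rintro _ ⟨j, rfl⟩
        exact Ideal.mem_radical_iff.mpr ⟨t₀, Ideal.subset_span ⟨j, rfl⟩⟩
      calc (Ideal.span (Set.range y)).radical ≤ J.radical.radical :=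
            Ideal.radical_mono h1
        _ = J.radical := Ideal.radical_idem J
    exact hyJ hxi
  choose n hn using hxJ
  set N : ℕ := Finset.univ.sup n + 1 with hNdef
  have hN1 : 1 ≤ N := Nat.le_add_left 1 _
  have hxN : ∀ i, x i ^ N ∈ J := by
    intro i
    have hni : n i ≤ N := le_trans (Finset.le_sup (Finset.mem_univ i)) (Nat.le_succ _)
    rw [show N = (N - n i) + n i from (Nat.sub_add_cancel hni).symm, pow_add]
    exact J.mul_mem_left _ (hn i)
  -- coefficient matrix P : x_i^N = Σ_j P i j * y_j^{t₀}
  have hPex : ∀ i, ∃ c : Fin d → R, ∑ j, c j * y j ^ t₀ = x i ^ N := by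
    intro i
    have h' : x i ^ N ∈ Submodule.span R (Set.range fun j => y j ^ t₀) := hxN i
    rw [Submodule.mem_span_range_iff_exists_fun] at h'
    obtain ⟨c, hc⟩ := h'
    exact ⟨c, by simpa [smul_eq_mul] using hc⟩
  choose P hP using hPex
  set Pm : Matrix (Fin d) (Fin d) R := Matrix.of fun i j => P i j with hPm
  -- the two matrices expressing (x_i^N) in terms of x
  set B : Matrix (Fin d) (Fin d) R := Matrix.of fun k j => y k ^ (t₀ - 1) * A k j with hB
  have hBdiag : Matrix.diagonal (fun k => y k ^ (t₀ - 1)) * A = B := by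
    ext k j; rw [Matrix.diagonal_mul]; rfl
  set Q : Matrix (Fin d) (Fin d) R := Pm * B with hQdef
  set Q' : Matrix (Fin d) (Fin d) R := Matrix.diagonal fun i => x i ^ (N - 1) with hQ'def
  set a : Fin d → R := fun i => x i ^ N with ha
  have hyt : ∀ k, y k ^ (t₀ - 1) * y k = y k ^ t₀ := by
    intro k
    rw [← pow_succ, Nat.sub_add_cancel ht₀]
  have hQa : Q.mulVec x = a := by
    funext i
    have step1 : Q.mulVec x i = ∑ j, (∑ k, P i k * (y k ^ (t₀ - 1) * A k j)) * x j := by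
      simp only [hQdef, Matrix.mulVec, dotProduct, Matrix.mul_apply, hB, hPm,
        Matrix.of_apply]
    rw [step1]
    rw [show ∑ j, (∑ k, P i k * (y k ^ (t₀ - 1) * A k j)) * x j
        = ∑ j, ∑ k, P i k * (y k ^ (t₀ - 1) * A k j) * x j from
      Finset.sum_congr rfl fun j _ => Finset.sum_mul _ _ _]
    rw [Finset.sum_comm]
    calc ∑ k, ∑ j, P i k * (y k ^ (t₀ - 1) * A k j) * x j
        = ∑ k, P i k * (y k ^ (t₀ - 1) * ∑ j, A k j * x j) := by
          refine Finset.sum_congr rfl fun k _ => ?_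
          rw [Finset.mul_sum, Finset.mul_sum]
          exact Finset.sum_congr rfl fun j _ => by ring
      _ = ∑ k, P i k * y k ^ t₀ := by
          refine Finset.sum_congr rfl fun k _ => ?_
          rw [← hA k, hyt k]
      _ = a i := hP i
  have hQ'a : Q'.mulVec x = a := by
    funext i
    rw [hQ'def, Matrix.mulVec_diagonal, ← pow_succ, Nat.sub_add_cancel hN1]
  -- determinants
  have hdetQ : Q.det = Pm.det * ((∏ i, y i) ^ (t₀ - 1) * A.det) := by
    rw [hQdef, Matrix.det_mul, ← hBdiag, Matrix.det_mul, Matrix.det_diagonal,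
      Finset.prod_pow]
  have hdetQ' : Q'.det = (∏ i, x i) ^ (N - 1) := by
    rw [hQ'def, Matrix.det_diagonal, Finset.prod_pow]
  -- the key congruence
  have hkey := aux_det_well_defined x a Q Q' hQa hQ'a
  -- Cramer: det Pm * y_j^{t₀} ∈ (x_1^N, ..., x_d^N)
  set IN : Ideal R := Ideal.span (Set.range a) with hIN
  have hcramP : ∀ j, Pm.det * y j ^ t₀ ∈ IN := by
    intro j
    have hPmv : Pm.mulVec (fun j => y j ^ t₀) = a := by
      funext i
      simp only [Matrix.mulVec, dotProduct, hPm, Matrix.of_apply]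
      exact hP i
    have h1 : Pm.adjugate.mulVec a = Pm.det • fun j => y j ^ t₀ := by
      rw [← hPmv, Matrix.mulVec_mulVec, Matrix.adjugate_mul, Matrix.smul_mulVec,
        Matrix.one_mulVec]
    have h2 := congrFun h1 j
    simp only [Pi.smul_apply, smul_eq_mul] at h2
    rw [← h2]
    simp only [Matrix.mulVec, dotProduct]
    exact Ideal.sum_mem _ fun i _ => Ideal.mul_mem_left _ _ (Ideal.subset_span ⟨i, rfl⟩)
  -- step: det Pm * (hypothesis) ∈ IN
  have hw : Pm.det * ((∏ i, y i) ^ (t₀ - 1) * (A.det * r)) ∈ IN :=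
    aux_mul_span_mem (by rintro _ ⟨j, rfl⟩; exact hcramP j) hmem
  -- multiply by (∏ x)^N and land in I2
  set I2 : Ideal R := Ideal.span (Set.range fun i => a i ^ 2) with hI2
  have hprodN : ∀ i, (∏ j, x j) ^ N * a i ∈ I2 := by
    intro i
    have : (∏ j, x j) ^ N * a i = (∏ j ∈ Finset.univ.erase i, x j ^ N) * a i ^ 2 := by
      rw [← Finset.prod_pow, ← Finset.mul_prod_erase Finset.univ (fun j => x j ^ N)
        (Finset.mem_univ i), ha]
      ring
    rw [this]
    exact Ideal.mul_mem_left _ _ (Ideal.subset_span ⟨i, rfl⟩)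
  have e1 : (∏ j, x j) ^ N * (Pm.det * ((∏ i, y i) ^ (t₀ - 1) * (A.det * r))) ∈ I2 :=
    aux_mul_span_mem (by rintro _ ⟨i, rfl⟩; exact hprodN i) hw
  have e2 : ((∏ i, a i) * (Q.det - Q'.det)) * r ∈ I2 := Ideal.mul_mem_right r _ hkey
  have hprodaN : ∏ i, a i = (∏ j, x j) ^ N := by rw [ha, Finset.prod_pow]
  have e3 : (∏ j, x j) ^ N * (Q'.det * r) ∈ I2 := by
    have : (∏ j, x j) ^ N * (Q'.det * r) =
        (∏ j, x j) ^ N * (Pm.det * ((∏ i, y i) ^ (t₀ - 1) * (A.det * r))) -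
          ((∏ i, a i) * (Q.det - Q'.det)) * r := by
      rw [hprodaN, hdetQ]
      ring
    rw [this]
    exact I2.sub_mem e1 e2
  -- conclude
  refine ⟨2 * N, by omega, ?_⟩
  have hexp : (∏ i, x i) ^ (2 * N - 1) * r = (∏ j, x j) ^ N * (Q'.det * r) := by
    rw [hdetQ', ← mul_assoc, ← pow_add]
    congr 2
    omega
  rw [hexp]
  have hseteq : (Set.range fun i => x i ^ (2 * N)) = Set.range fun i => a i ^ 2 := by
    funext z
    simp only [ha, ← pow_mul]
    rw [show N * 2 = 2 * N from Nat.mul_comm N 2]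
  rw [show Ideal.span (Set.range fun i => x i ^ (2 * N)) = I2 from by rw [hI2, hseteq]]
  exact e3
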